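/- Let z and z' be random vectors in Z = {z ∈ {0,1}^N : Σᵢ zᵢ = k} with E[z] = x and E[z'] = x' for x, x' ∈ X (the capped simplex), produced by the threshold-based online rounding procedure with the same uniform random seed ξ ∈ [0,1], where x' = x - δ e_u + δ e_v is an elementary mass movement of δ ≥ 0 from coordinate u to coordinate v (u ≠ v). Then P(z ≠ z') ≤ δ(|v - u| + 1), and consequently E[‖z' - z‖_{1,w'}] ≤ 2kN‖w'‖_∞ δ, where ‖y‖_{1,w'} = Σᵢ |yᵢ| w'ᵢ. -/

import Mathlib

open MeasureTheory

/-- Number of thresholds `ξ, ξ+1, ξ+2, …` crossed by the prefix sum `Σ_{j ≤ i} x_j`. -/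
noncomputable def cumCount {N : ℕ} (x : Fin N → ℝ) (ξ : ℝ) (i : Fin N) : ℕ :=
  (⌊(∑ j ∈ Finset.univ.filter (fun j => j ≤ i), x j) - ξ⌋ + 1).toNat

/-- Number of thresholds crossed by the strict prefix sum `Σ_{j < i} x_j`. -/
noncomputable def prevCount {N : ℕ} (x : Fin N → ℝ) (ξ : ℝ) (i : Fin N) : ℕ :=
  (⌊(∑ j ∈ Finset.univ.filter (fun j => j < i), x j) - ξ⌋ + 1).toNat

/-- Threshold-based online rounding with seed `ξ`. -/
noncomputable def roundPt {N : ℕ} (x : Fin N → ℝ) (ξ : ℝ) (i : Fin N) : ℝ :=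
  (cumCount x ξ i : ℝ) - (prevCount x ξ i : ℝ)

namespace Stmt12Aux

lemma floor_shift_measure (a δ : ℝ) (hδ : 0 ≤ δ) :
    volume {ξ : ℝ | ξ ∈ Set.Ioc (0:ℝ) 1 ∧ ⌊a - δ - ξ⌋ ≠ ⌊a - ξ⌋} ≤ ENNReal.ofReal δ := by
  set m := Int.fract a with hmdef
  have hm0 : 0 ≤ m := Int.fract_nonneg a
  have hm1 : m < 1 := Int.fract_lt_one a
  have ha : (⌊a⌋ : ℝ) + m = a := Int.floor_add_fract a
  have hsub : {ξ : ℝ | ξ ∈ Set.Ioc (0:ℝ) 1 ∧ ⌊a - δ - ξ⌋ ≠ ⌊a - ξ⌋} ⊆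
      Set.Ioc (max (m - δ) 0) (min m 1) ∪ Set.Ioc (m + 1 - δ) 1 := by
    rintro ξ ⟨⟨hξ0, hξ1⟩, hne⟩
    have hle : ⌊a - δ - ξ⌋ ≤ ⌊a - ξ⌋ := Int.floor_le_floor (by linarith)
    have hlt : ⌊a - δ - ξ⌋ < ⌊a - ξ⌋ := lt_of_le_of_ne hle hne
    have h1 : (⌊a - δ - ξ⌋ : ℝ) + 1 ≤ (⌊a - ξ⌋ : ℝ) := by exact_mod_cast hlt
    have h2 := Int.lt_floor_add_one (a - δ - ξ)
    have hkey : a - ξ - (⌊a - ξ⌋ : ℝ) < δ := by linarith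
    have hub : ⌊a - ξ⌋ ≤ ⌊a⌋ := Int.floor_le_floor (by linarith)
    have hlb : ⌊a⌋ - 1 ≤ ⌊a - ξ⌋ := by
      have : ⌊a - 1⌋ ≤ ⌊a - ξ⌋ := Int.floor_le_floor (by linarith)
      simpa [Int.floor_sub_intCast a (1:ℤ)] using this
    rcases eq_or_lt_of_le hub with heq | hlt2
    · left
      have hfla : (⌊a - ξ⌋ : ℝ) ≤ a - ξ := Int.floor_le _
      rw [heq] at hkey hfla
      constructor
      · exact max_lt (by linarith) hξ0
      · exact le_min (by linarith) hξ1
    · right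
      have heq : ⌊a - ξ⌋ = ⌊a⌋ - 1 := by omega
      rw [heq] at hkey
      push_cast at hkey
      exact ⟨by linarith, hξ1⟩
  refine le_trans (measure_mono hsub) (le_trans (measure_union_le _ _) ?_)
  rw [Real.volume_Ioc, Real.volume_Ioc]
  rcases le_total δ m with h | h
  · have : ENNReal.ofReal (1 - (m + 1 - δ)) = 0 := by
      rw [ENNReal.ofReal_eq_zero]; linarith
    rw [this, add_zero]
    apply ENNReal.ofReal_le_ofReal
    have h3 : max (m - δ) 0 = m - δ := max_eq_left (by linarith)
    have h4 : min m 1 = m := min_eq_left (by linarith)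
    rw [h3, h4]; linarith
  · have h1 : ENNReal.ofReal (min m 1 - max (m - δ) 0) ≤ ENNReal.ofReal m := by
      apply ENNReal.ofReal_le_ofReal
      have h4 : min m 1 = m := min_eq_left (by linarith)
      rw [h4]
      have : max (m - δ) 0 ≥ 0 := le_max_right _ _
      linarith
    refine le_trans (add_le_add h1 le_rfl) ?_
    rw [← ENNReal.ofReal_add hm0 (by linarith)]
    apply ENNReal.ofReal_le_ofReal; linarith

noncomputable def pref {N : ℕ} (x : Fin N → ℝ) (m : ℕ) : ℝ :=
  ∑ j ∈ Finset.univ.filter (fun j : Fin N => (j : ℕ) < m), x j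

noncomputable def cnt {N : ℕ} (x : Fin N → ℝ) (ξ : ℝ) (m : ℕ) : ℕ :=
  (⌊pref x m - ξ⌋ + 1).toNat

lemma cum_eq {N : ℕ} (x : Fin N → ℝ) (ξ : ℝ) (i : Fin N) :
    cumCount x ξ i = cnt x ξ (i + 1) := by
  unfold cumCount cnt pref
  have : Finset.univ.filter (fun j => j ≤ i) =
      Finset.univ.filter (fun j : Fin N => (j : ℕ) < (i : ℕ) + 1) := by
    apply Finset.filter_congr
    intro j _
    rw [Fin.le_def]; omega
  rw [this]

lemma prev_eq {N : ℕ} (x : Fin N → ℝ) (ξ : ℝ) (i : Fin N) :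
    prevCount x ξ i = cnt x ξ i := by
  unfold prevCount cnt pref
  have : Finset.univ.filter (fun j => j < i) =
      Finset.univ.filter (fun j : Fin N => (j : ℕ) < (i : ℕ)) := by
    apply Finset.filter_congr
    intro j _
    rw [Fin.lt_def]
  rw [this]

lemma pref_zero {N : ℕ} (x : Fin N → ℝ) : pref x 0 = 0 := by
  simp [pref]

lemma pref_all {N : ℕ} (x : Fin N → ℝ) : pref x N = ∑ i, x i := by
  unfold pref
  congr 1
  rw [Finset.filter_eq_self]
  exact fun j _ => j.isLt

lemma cnt_zero {N : ℕ} (x : Fin N → ℝ) {ξ : ℝ} (h0 : 0 < ξ) (h1 : ξ ≤ 1) :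
    cnt x ξ 0 = 0 := by
  unfold cnt
  rw [pref_zero]
  have : ⌊(0 : ℝ) - ξ⌋ = -1 := by
    apply Int.floor_eq_iff.mpr
    constructor <;> push_cast <;> linarith
  rw [this]
  simp

lemma pref_mono {N : ℕ} (x : Fin N → ℝ) (hx : ∀ i, 0 ≤ x i) {m₁ m₂ : ℕ} (h : m₁ ≤ m₂) :
    pref x m₁ ≤ pref x m₂ := by
  apply Finset.sum_le_sum_of_subset_of_nonneg
  · intro j hj
    simp only [Finset.mem_filter, Finset.mem_univ, true_and] at hj ⊢
    omega
  · intro i _ _; exact hx i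

lemma cnt_mono {N : ℕ} (x : Fin N → ℝ) (hx : ∀ i, 0 ≤ x i) (ξ : ℝ) {m₁ m₂ : ℕ} (h : m₁ ≤ m₂) :
    cnt x ξ m₁ ≤ cnt x ξ m₂ := by
  unfold cnt
  have := Int.floor_le_floor (R := ℝ) (sub_le_sub_right (pref_mono x hx h) ξ)
  omega

lemma cnt_all {N k : ℕ} (x : Fin N → ℝ) (hsum : ∑ i, x i = k) {ξ : ℝ}
    (h0 : 0 < ξ) (h1 : ξ ≤ 1) : cnt x ξ N = k := by
  unfold cnt
  rw [pref_all, hsum]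
  have : ⌊(k : ℝ) - ξ⌋ = (k : ℤ) - 1 := by
    apply Int.floor_eq_iff.mpr
    constructor <;> push_cast <;> linarith
  rw [this]
  omega

lemma sum_roundPt {N k : ℕ} (x : Fin N → ℝ) (hsum : ∑ i, x i = k)
    {ξ : ℝ} (h0 : 0 < ξ) (h1 : ξ ≤ 1) : ∑ i, roundPt x ξ i = k := by
  have : ∀ i : Fin N, roundPt x ξ i =
      (fun m : ℕ => ((cnt x ξ (m+1) : ℝ) - (cnt x ξ m : ℝ))) (i : ℕ) := by
    intro i
    simp [roundPt, cum_eq, prev_eq]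
  rw [Finset.sum_congr rfl (fun i _ => this i)]
  rw [Fin.sum_univ_eq_sum_range (fun m => ((cnt x ξ (m+1) : ℝ) - (cnt x ξ m : ℝ))) N]
  rw [Finset.sum_range_sub (fun m => ((cnt x ξ m : ℝ)))]
  rw [cnt_zero x h0 h1, cnt_all x hsum h0 h1]
  simp

lemma roundPt_nonneg {N : ℕ} (x : Fin N → ℝ) (hx : ∀ i, 0 ≤ x i) (ξ : ℝ) (i : Fin N) :
    0 ≤ roundPt x ξ i := by
  rw [roundPt, cum_eq, prev_eq, sub_nonneg]
  exact_mod_cast cnt_mono x hx ξ (Nat.le_succ _)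

lemma pref_rel {N : ℕ} (x x' : Fin N → ℝ) (u v : Fin N) (δ : ℝ)
    (hx' : ∀ i, x' i = x i - (if i = u then δ else 0) + (if i = v then δ else 0)) (m : ℕ) :
    pref x' m = pref x m - (if (u:ℕ) < m then δ else 0) + (if (v:ℕ) < m then δ else 0) := by
  unfold pref
  rw [Finset.sum_congr rfl (fun j _ => hx' j)]
  rw [Finset.sum_add_distrib, Finset.sum_sub_distrib]
  rw [Finset.sum_ite_eq' _ u (fun _ => δ), Finset.sum_ite_eq' _ v (fun _ => δ)]
  simp only [Finset.mem_filter, Finset.mem_univ, true_and]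

lemma measurable_roundPt {N : ℕ} (x : Fin N → ℝ) (i : Fin N) :
    Measurable (fun ξ : ℝ => roundPt x ξ i) := by
  unfold roundPt cumCount prevCount
  have h : ∀ a : ℝ, Measurable (fun ξ : ℝ => (((⌊a - ξ⌋ + 1).toNat : ℕ) : ℝ)) := by
    intro a
    have h1 : Measurable fun ξ : ℝ => ⌊a - ξ⌋ :=
      Int.measurable_floor.comp (measurable_const.sub measurable_id)
    exact Measurable.comp (g := fun n : ℤ => (((n + 1).toNat : ℕ) : ℝ))
      measurable_from_top h1
  exact (h _).sub (h _)

end Stmt12Aux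

set_option maxHeartbeats 1000000 in
open Stmt12Aux in
/-- Under an elementary mass movement `x' = x - δe_u + δe_v`, the roundings of `x` and
`x'` coupled via the same uniform seed `ξ` differ with probability at most
`δ(|v-u|+1)`, and `E[‖z' - z‖_{1,w'}] ≤ 2kN‖w'‖_∞ δ`. -/
theorem stmt12 (N k : ℕ) (hk : 1 ≤ k) (x x' : Fin N → ℝ)
    (hx : (∀ i, x i ∈ Set.Icc (0 : ℝ) 1) ∧ ∑ i, x i = k)
    (hx'mem : (∀ i, x' i ∈ Set.Icc (0 : ℝ) 1) ∧ ∑ i, x' i = k)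
    (u v : Fin N) (huv : u ≠ v) (δ : ℝ) (hδ : 0 ≤ δ)
    (hx' : ∀ i, x' i = x i - (if i = u then δ else 0) + (if i = v then δ else 0))
    (w' : Fin N → ℝ) (hw' : ∀ i, 0 ≤ w' i) :
    volume {ξ : ℝ | ξ ∈ Set.Ioc (0 : ℝ) 1 ∧ roundPt x ξ ≠ roundPt x' ξ} ≤
      ENNReal.ofReal (δ * (|((v : ℕ) : ℝ) - ((u : ℕ) : ℝ)| + 1)) ∧
    (∫ ξ in Set.Ioc (0 : ℝ) 1, ∑ i, |roundPt x' ξ i - roundPt x ξ i| * w' i) ≤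
      2 * (k : ℝ) * (N : ℝ) * (Finset.univ.sup' ⟨u, Finset.mem_univ u⟩ w') * δ := by
  obtain ⟨hx1, hx2⟩ := hx
  obtain ⟨hx'1, hx'2⟩ := hx'mem
  set D := {ξ : ℝ | ξ ∈ Set.Ioc (0 : ℝ) 1 ∧ roundPt x ξ ≠ roundPt x' ξ} with hD
  set mn := min (u:ℕ) (v:ℕ) with hmn
  set mx := max (u:ℕ) (v:ℕ) with hmx
  set L := |((v : ℕ) : ℝ) - ((u : ℕ) : ℝ)| with hL
  have hLnn : 0 ≤ L := abs_nonneg _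
  have hprefrel := pref_rel x x' u v δ hx'
  set A : ℕ → Set ℝ := fun m =>
    {ξ : ℝ | ξ ∈ Set.Ioc (0:ℝ) 1 ∧ ⌊pref x' m - ξ⌋ ≠ ⌊pref x m - ξ⌋} with hA
  have huvval : (u:ℕ) ≠ (v:ℕ) := fun h => huv (Fin.ext h)
  -- each A m in the window has small measure
  have hAm : ∀ m ∈ Finset.Ico (mn+1) (mx+1), volume (A m) ≤ ENNReal.ofReal δ := by
    intro m hm
    rw [Finset.mem_Ico] at hm
    rcases Nat.lt_or_ge (u:ℕ) (v:ℕ) with hc | hc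
    · -- u < v : pref x' m = pref x m - δ
      have hu : (u:ℕ) < m := by omega
      have hv : ¬ ((v:ℕ) < m) := by omega
      have hsub : A m ⊆ {ξ : ℝ | ξ ∈ Set.Ioc (0:ℝ) 1 ∧
          ⌊pref x m - δ - ξ⌋ ≠ ⌊pref x m - ξ⌋} := by
        rintro ξ ⟨h1, h2⟩
        refine ⟨h1, ?_⟩
        rwa [hprefrel m, if_pos hu, if_neg hv, add_zero] at h2
      exact le_trans (measure_mono hsub) (floor_shift_measure _ _ hδ)
    · -- v < u : pref x' m = pref x m + δ
      have hv : (v:ℕ) < m := by omega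
      have hu : ¬ ((u:ℕ) < m) := by omega
      have hsub : A m ⊆ {ξ : ℝ | ξ ∈ Set.Ioc (0:ℝ) 1 ∧
          ⌊(pref x m + δ) - δ - ξ⌋ ≠ ⌊(pref x m + δ) - ξ⌋} := by
        rintro ξ ⟨h1, h2⟩
        refine ⟨h1, ?_⟩
        rw [hprefrel m, if_pos hv, if_neg hu, sub_zero] at h2
        have he : pref x m + δ - δ = pref x m := by ring
        rw [he]
        exact h2.symm
      exact le_trans (measure_mono hsub) (floor_shift_measure _ _ hδ)
  -- the difference set is covered by the window
  have hDsub : D ⊆ ⋃ m ∈ Finset.Ico (mn+1) (mx+1), A m := by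
    rintro ξ ⟨hIoc, hne⟩
    have hfl : ∃ m : ℕ, ⌊pref x' m - ξ⌋ ≠ ⌊pref x m - ξ⌋ := by
      by_contra hcon
      push_neg at hcon
      apply hne
      funext i
      have hc : ∀ m, cnt x' ξ m = cnt x ξ m := fun m => by unfold cnt; rw [hcon m]
      rw [roundPt, roundPt, cum_eq, prev_eq, cum_eq, prev_eq, hc, hc]
    obtain ⟨m, hm⟩ := hfl
    have hmem : m ∈ Finset.Ico (mn+1) (mx+1) := by
      rw [Finset.mem_Ico]
      by_contra hcon
      apply hm
      have hif : (if (u:ℕ) < m then δ else 0) = (if (v:ℕ) < m then δ else 0) := by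
        rcases em ((v:ℕ) < m) with h | h
        · rw [if_pos h, if_pos (by omega)]
        · rw [if_neg h, if_neg (by omega)]
      rw [hprefrel m, hif, sub_add_cancel]
    simp only [Set.mem_iUnion]
    exact ⟨m, hmem, hIoc, hm⟩
  -- part 1
  have hcard : (Finset.Ico (mn+1) (mx+1)).card = mx - mn := by
    rw [Nat.card_Ico]; omega
  have hcardL : ((mx - mn : ℕ) : ℝ) ≤ L := by
    rcases le_total (u:ℕ) (v:ℕ) with h | h
    · have h1 : mx - mn = (v:ℕ) - (u:ℕ) := by omega
      rw [h1, hL, Nat.cast_sub h]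
      rw [abs_of_nonneg (by
        have : ((u:ℕ):ℝ) ≤ ((v:ℕ):ℝ) := by exact_mod_cast h
        linarith)]
    · have h1 : mx - mn = (u:ℕ) - (v:ℕ) := by omega
      rw [h1, Nat.cast_sub h]
      rw [hL, abs_of_nonpos (by
        have : ((v:ℕ):ℝ) ≤ ((u:ℕ):ℝ) := by exact_mod_cast h
        linarith)]
      ring_nf
      exact le_refl _
  have part1 : volume D ≤ ENNReal.ofReal (δ * (L + 1)) := by
    refine le_trans (measure_mono hDsub) ?_
    refine le_trans (measure_biUnion_finset_le _ _) ?_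
    refine le_trans (Finset.sum_le_sum hAm) ?_
    rw [Finset.sum_const, hcard, nsmul_eq_mul]
    rw [← ENNReal.ofReal_natCast (mx - mn), ← ENNReal.ofReal_mul (Nat.cast_nonneg _)]
    apply ENNReal.ofReal_le_ofReal
    nlinarith
  refine ⟨part1, ?_⟩
  -- part 2
  set W := Finset.univ.sup' ⟨u, Finset.mem_univ u⟩ w' with hW
  have hWnn : 0 ≤ W := le_trans (hw' u) (Finset.le_sup' w' (Finset.mem_univ u))
  have hwle : ∀ i, w' i ≤ W := fun i => Finset.le_sup' w' (Finset.mem_univ i)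
  set g : ℝ → ℝ := fun ξ => ∑ i, |roundPt x' ξ i - roundPt x ξ i| * w' i with hg
  have hgmeas : Measurable g := by
    apply Finset.measurable_sum
    intro i _
    exact (((measurable_roundPt x' i).sub (measurable_roundPt x i)).abs).mul_const _
  have hgnn : ∀ ξ, 0 ≤ g ξ := by
    intro ξ
    apply Finset.sum_nonneg
    intro i _
    exact mul_nonneg (abs_nonneg _) (hw' i)
  set C : ℝ := 2 * k * W with hC
  have hCnn : 0 ≤ C := by positivity
  have hgbound : ∀ ξ ∈ Set.Ioc (0:ℝ) 1, g ξ ≤ C := by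
    rintro ξ ⟨h0, h1⟩
    have hb : ∀ i : Fin N, |roundPt x' ξ i - roundPt x ξ i| * w' i ≤
        (roundPt x ξ i + roundPt x' ξ i) * W := by
      intro i
      have h1' := roundPt_nonneg x (fun i => (hx1 i).1) ξ i
      have h2' := roundPt_nonneg x' (fun i => (hx'1 i).1) ξ i
      have habs : |roundPt x' ξ i - roundPt x ξ i| ≤ roundPt x ξ i + roundPt x' ξ i := by
        rw [abs_sub_le_iff]
        constructor <;> linarith
      exact mul_le_mul habs (hwle i) (hw' i) (by linarith)
    calc g ξ ≤ ∑ i, (roundPt x ξ i + roundPt x' ξ i) * W :=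
          Finset.sum_le_sum (fun i _ => hb i)
      _ = ((∑ i, roundPt x ξ i) + (∑ i, roundPt x' ξ i)) * W := by
          rw [← Finset.sum_add_distrib, ← Finset.sum_mul]
      _ = C := by
          rw [sum_roundPt x hx2 h0 h1, sum_roundPt x' hx'2 h0 h1, hC]; ring
  have hDmeas : MeasurableSet D := by
    have hDeq : D = Set.Ioc (0:ℝ) 1 ∩ ⋃ i, {ξ | roundPt x ξ i ≠ roundPt x' ξ i} := by
      ext ξ
      simp only [hD, Set.mem_setOf_eq, Set.mem_inter_iff, Set.mem_iUnion, Function.ne_iff]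
    rw [hDeq]
    refine measurableSet_Ioc.inter (MeasurableSet.iUnion fun i => ?_)
    exact (measurableSet_eq_fun (measurable_roundPt x i) (measurable_roundPt x' i)).compl
  have hIocFin : volume (Set.Ioc (0:ℝ) 1) < ⊤ := by
    rw [Real.volume_Ioc]; exact ENNReal.ofReal_lt_top
  have hintg : IntegrableOn g (Set.Ioc (0:ℝ) 1) := by
    refine Integrable.mono' (g := fun _ => C) ((integrableOn_const_iff (C := C)).mpr (Or.inr hIocFin))
      hgmeas.aestronglyMeasurable ?_
    filter_upwards [ae_restrict_mem measurableSet_Ioc] with ξ hξ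
    rw [Real.norm_eq_abs, abs_of_nonneg (hgnn ξ)]
    exact hgbound ξ hξ
  have hintind : IntegrableOn (D.indicator fun _ => C) (Set.Ioc (0:ℝ) 1) := by
    exact ((integrableOn_const_iff (C := C)).mpr (Or.inr hIocFin)).indicator hDmeas
  have hmono : ∀ ξ ∈ Set.Ioc (0:ℝ) 1, g ξ ≤ D.indicator (fun _ => C) ξ := by
    intro ξ hξ
    by_cases hmem : ξ ∈ D
    · rw [Set.indicator_of_mem hmem]
      exact hgbound ξ hξ
    · rw [Set.indicator_of_notMem hmem]
      have heq : roundPt x ξ = roundPt x' ξ := by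
        by_contra hne
        exact hmem ⟨hξ, hne⟩
      have : g ξ = 0 := by
        rw [hg]
        apply Finset.sum_eq_zero
        intro i _
        rw [heq]
        simp
      linarith
  have hstep1 : (∫ ξ in Set.Ioc (0:ℝ) 1, g ξ) ≤
      ∫ ξ in Set.Ioc (0:ℝ) 1, D.indicator (fun _ => C) ξ :=
    setIntegral_mono_on hintg hintind measurableSet_Ioc hmono
  have hDIoc : Set.Ioc (0:ℝ) 1 ∩ D = D := by
    apply Set.inter_eq_self_of_subset_right
    exact fun ξ hξ => hξ.1
  have hstep2 : (∫ ξ in Set.Ioc (0:ℝ) 1, D.indicator (fun _ => C) ξ) =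
      (volume D).toReal * C := by
    rw [setIntegral_indicator hDmeas, hDIoc, setIntegral_const, smul_eq_mul]
    rfl
  have hvolD : (volume D).toReal ≤ δ * (L + 1) :=
    ENNReal.toReal_le_of_le_ofReal (by positivity) part1
  have hLN : L + 1 ≤ (N:ℝ) := by
    have hu1 : ((u:ℕ):ℝ) + 1 ≤ (N:ℝ) := by exact_mod_cast u.isLt
    have hv1 : ((v:ℕ):ℝ) + 1 ≤ (N:ℝ) := by exact_mod_cast v.isLt
    have hu0 : (0:ℝ) ≤ ((u:ℕ):ℝ) := Nat.cast_nonneg _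
    have hv0 : (0:ℝ) ≤ ((v:ℕ):ℝ) := Nat.cast_nonneg _
    rw [hL]
    rcases abs_cases (((v:ℕ):ℝ) - ((u:ℕ):ℝ)) with ⟨h, _⟩ | ⟨h, _⟩ <;> rw [h] <;> linarith
  calc (∫ ξ in Set.Ioc (0:ℝ) 1, ∑ i, |roundPt x' ξ i - roundPt x ξ i| * w' i)
      = ∫ ξ in Set.Ioc (0:ℝ) 1, g ξ := rfl
    _ ≤ (volume D).toReal * C := le_trans hstep1 (le_of_eq hstep2)
    _ ≤ (δ * (L + 1)) * C := by
        apply mul_le_mul_of_nonneg_right hvolD hCnn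
    _ ≤ 2 * (k : ℝ) * (N : ℝ) * W * δ := by
        rw [hC]
        nlinarith [mul_nonneg (mul_nonneg hδ (Nat.cast_nonneg k)) hWnn]
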